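/- Fix n ≥ 1, r ≥ 1, s ≥ 0. Let A_a ∈ M_n(ℂ[ħ][[Q^1,…,Q^r,t^0,…,t^s]]) for 1 ≤ a ≤ r, and suppose p_a := A_a|_{Q=t=0} has entries in ℂ. Let e_0 ∈ ℂ^n be a vector such that the vectors P(p_1,…,p_r)e_0, with P ranging over all polynomials, span ℂ^n. Let M = (ℂ[ħ][[Q,t]])^n, and let N ⊆ M be any ℂ[ħ][[Q,t]]-submodule that contains the constant vector e_0 and is stable under each of the operators v ↦ ħQ^a ∂v/∂Q^a + A_a·v (1 ≤ a ≤ r). Then N = M. -/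

import Mathlib

noncomputable section

/-- `ℂ((ħ⁻¹))`, realized as formal Laurent series (Hahn series over `ℤ`) in the
variable `X = ħ⁻¹`; the coefficient of `ħ^k` is the coefficient at `z = -k`. -/
abbrev LH : Type := LaurentSeries ℂ

/-- The element `ħ = X⁻¹`: the Hahn series with single coefficient `1` in degree `-1`. -/
def hbar : LH := HahnSeries.single (-1 : ℤ) 1

/-- `f` lies in the subring `ℂ[ħ]` (no positive powers of the variable `X = ħ⁻¹`). -/
def InPolyH (f : LH) : Prop := ∀ z : ℤ, 0 < z → f.coeff z = 0

/-- `f` lies in the subring `ℂ[[ħ⁻¹]]`. -/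
def InPSinv (f : LH) : Prop := ∀ z : ℤ, z < 0 → f.coeff z = 0

/-- `f` lies in `ħ⁻¹ · ℂ[[ħ⁻¹]]` (only strictly negative powers of `ħ`). -/
def InPSinvPos (f : LH) : Prop := ∀ z : ℤ, z ≤ 0 → f.coeff z = 0

/-- `f` is a constant (a complex scalar), i.e. independent of `ħ`. -/
def IsConstL (f : LH) : Prop := ∀ z : ℤ, z ≠ 0 → f.coeff z = 0

section ops

variable {σ R : Type} [CommRing R] {n : ℕ}

/-- Formal partial derivative `∂/∂x` on multivariate formal power series. -/
def pd (x : σ) (f : MvPowerSeries σ R) : MvPowerSeries σ R :=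
  fun d => ((d x + 1 : ℕ) : R) * MvPowerSeries.coeff (R := R) (d + Finsupp.single x 1) f

/-- Euler derivative `x·∂/∂x` on multivariate formal power series. -/
def eulerD (x : σ) (f : MvPowerSeries σ R) : MvPowerSeries σ R :=
  fun d => ((d x : ℕ) : R) * MvPowerSeries.coeff (R := R) d f

/-- Entrywise partial derivative of a matrix of power series. -/
def mpd (x : σ) (M : Matrix (Fin n) (Fin n) (MvPowerSeries σ R)) :
    Matrix (Fin n) (Fin n) (MvPowerSeries σ R) := M.map (pd x)

/-- Entrywise Euler derivative of a matrix of power series. -/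
def meu (x : σ) (M : Matrix (Fin n) (Fin n) (MvPowerSeries σ R)) :
    Matrix (Fin n) (Fin n) (MvPowerSeries σ R) := M.map (eulerD x)

/-- A constant matrix, viewed as a matrix of power series. -/
def mC (M : Matrix (Fin n) (Fin n) R) : Matrix (Fin n) (Fin n) (MvPowerSeries σ R) :=
  M.map (MvPowerSeries.C (σ := σ) (R := R))

/-- Constant term (restriction to `Q = t = 0`) of a matrix of power series. -/
def m0 (M : Matrix (Fin n) (Fin n) (MvPowerSeries σ R)) : Matrix (Fin n) (Fin n) R :=
  M.map (MvPowerSeries.constantCoeff (σ := σ) (R := R))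

end ops

section lops

variable {σ : Type} {n : ℕ}

/-- The scalar `ħ` inside `ℂ((ħ⁻¹))[[Q,t]]`. -/
def hbarC (σ : Type) : MvPowerSeries σ LH := MvPowerSeries.C (σ := σ) (R := LH) hbar

/-- The entries of the matrix `M` lie in `ℂ[ħ][[Q,t]]`. -/
def MatPolyH (M : Matrix (Fin n) (Fin n) (MvPowerSeries σ LH)) : Prop :=
  ∀ (i j : Fin n) (d : σ →₀ ℕ), InPolyH (MvPowerSeries.coeff (R := LH) d (M i j))

/-- The entries of the matrix `M` lie in `ℂ[[Q,t]]`, i.e. are independent of `ħ`. -/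
def MatNoH (M : Matrix (Fin n) (Fin n) (MvPowerSeries σ LH)) : Prop :=
  ∀ (i j : Fin n) (d : σ →₀ ℕ), IsConstL (MvPowerSeries.coeff (R := LH) d (M i j))

/-- The first-order operator `v ↦ ħ·(x ∂/∂x)v + A·v` on column vectors. -/
def nablaE (x : σ) (A : Matrix (Fin n) (Fin n) (MvPowerSeries σ LH))
    (v : Fin n → MvPowerSeries σ LH) : Fin n → MvPowerSeries σ LH :=
  fun i => hbarC σ * eulerD x (v i) + A.mulVec v i

/-- The first-order operator `v ↦ ħ·(∂/∂x)v + A·v` on column vectors. -/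
def nablaP (x : σ) (A : Matrix (Fin n) (Fin n) (MvPowerSeries σ LH))
    (v : Fin n → MvPowerSeries σ LH) : Fin n → MvPowerSeries σ LH :=
  fun i => hbarC σ * pd x (v i) + A.mulVec v i

end lops

/-- (generation of an abstract quantum D-module by the unit section:
if the fiber at the origin is generated by `e₀` over `ℂ[p₁,…,p_r]`, then any
`ℂ[ħ][[Q,t]]`-submodule of `(ℂ[ħ][[Q,t]])^n` containing `e₀` and stable under the
operators `ħQ^a∂/∂Q^a + A_a` is everything).  Here `ℂ[ħ][[Q,t]]` is realized as
`MvPowerSeries (Fin r ⊕ Fin (s+1)) (Polynomial ℂ)`, with `ħ` the polynomial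
variable. -/
theorem statement12 (n r s : ℕ) (hn : 1 ≤ n) (hr : 1 ≤ r)
    (A : Fin r → Matrix (Fin n) (Fin n)
      (MvPowerSeries (Fin r ⊕ Fin (s + 1)) (Polynomial ℂ)))
    -- `p_a := A_a|_{Q=t=0}` has entries in `ℂ`
    (p : Fin r → Matrix (Fin n) (Fin n) ℂ)
    (hpdef : ∀ a, m0 (A a) = (p a).map Polynomial.C)
    -- the vectors `P(p₁,…,p_r)e₀` span `ℂ^n`
    (e₀ : Fin n → ℂ)
    (hgen : ∀ W : Submodule ℂ (Fin n → ℂ), e₀ ∈ W →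
      (∀ a, ∀ w ∈ W, (p a).mulVec w ∈ W) → W = ⊤)
    -- `N` is a submodule containing `e₀` and stable under `v ↦ ħQ^a∂v/∂Q^a + A_a v`
    (N : Submodule (MvPowerSeries (Fin r ⊕ Fin (s + 1)) (Polynomial ℂ))
      (Fin n → MvPowerSeries (Fin r ⊕ Fin (s + 1)) (Polynomial ℂ)))
    (he₀N : (fun j => MvPowerSeries.C (σ := Fin r ⊕ Fin (s + 1)) (R := Polynomial ℂ)
      (Polynomial.C (e₀ j))) ∈ N)
    (hstab : ∀ (a : Fin r), ∀ v ∈ N,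
      (fun i => MvPowerSeries.C (σ := Fin r ⊕ Fin (s + 1)) (R := Polynomial ℂ) Polynomial.X
          * eulerD (Sum.inl a) (v i) + (A a).mulVec v i) ∈ N) :
    N = ⊤ := by
  classical
  set cc : MvPowerSeries (Fin r ⊕ Fin (s + 1)) (Polynomial ℂ) →+* Polynomial ℂ :=
    MvPowerSeries.constantCoeff (σ := Fin r ⊕ Fin (s + 1)) (R := Polynomial ℂ) with hcc
  -- the subspace of `ℂ^n` of constant terms of constant-vector type attained in `N`
  have hWsub : ∃ W : Submodule ℂ (Fin n → ℂ),
      (W : Set (Fin n → ℂ)) =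
        {w | ∃ v ∈ N, ∀ j, cc (v j) = Polynomial.C (w j)} := by
    refine ⟨⟨⟨⟨_, ?_⟩, ?_⟩, ?_⟩, rfl⟩
    · rintro x y ⟨v, hv, hvx⟩ ⟨u, hu, huy⟩
      exact ⟨v + u, N.add_mem hv hu, fun j => by
        simp [Pi.add_apply, map_add, hvx j, huy j]⟩
    · exact ⟨0, N.zero_mem, fun j => by simp⟩
    · rintro c x ⟨v, hv, hvx⟩
      refine ⟨(MvPowerSeries.C (σ := Fin r ⊕ Fin (s + 1)) (R := Polynomial ℂ) (Polynomial.C c)) • v,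
        N.smul_mem _ hv, fun j => ?_⟩
      simp only [Pi.smul_apply, smul_eq_mul, map_mul]
      rw [show cc (MvPowerSeries.C (σ := Fin r ⊕ Fin (s + 1)) (R := Polynomial ℂ) (Polynomial.C c))
          = Polynomial.C c from MvPowerSeries.constantCoeff_C _, hvx j, ← Polynomial.C_mul]
  obtain ⟨W, hW⟩ := hWsub
  have hmemW : ∀ w : Fin n → ℂ,
      (w ∈ W ↔ ∃ v ∈ N, ∀ j, cc (v j) = Polynomial.C (w j)) := by
    intro w
    rw [← SetLike.mem_coe, hW]; rfl
  -- constant coefficient of the Euler derivative vanishes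
  have heuler : ∀ (x : Fin r ⊕ Fin (s + 1)) (f : MvPowerSeries (Fin r ⊕ Fin (s + 1)) (Polynomial ℂ)),
      cc (eulerD x f) = 0 := by
    intro x f
    have : cc (eulerD x f) =
        MvPowerSeries.coeff (R := Polynomial ℂ) (0 : (Fin r ⊕ Fin (s + 1)) →₀ ℕ) (eulerD x f) := by
      rw [MvPowerSeries.coeff_zero_eq_constantCoeff_apply]
    rw [this, MvPowerSeries.coeff_apply]
    show ((((0 : (Fin r ⊕ Fin (s + 1)) →₀ ℕ) x : ℕ)) : Polynomial ℂ) *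
      MvPowerSeries.coeff (R := Polynomial ℂ) (0 : (Fin r ⊕ Fin (s + 1)) →₀ ℕ) f = 0
    simp
  -- constant coefficient of `A a`
  have hAcc : ∀ (a : Fin r) (i j : Fin n),
      cc (A a i j) = Polynomial.C (p a i j) := by
    intro a i j
    have h := hpdef a
    have h2 := congrFun (congrFun h i) j
    simpa [m0, Matrix.map_apply] using h2
  -- `e₀ ∈ W`
  have he₀W : e₀ ∈ W := by
    rw [hmemW]
    exact ⟨_, he₀N, fun j => by simp [hcc, MvPowerSeries.constantCoeff_C]⟩
  -- `W` is stable under the `p a`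
  have hWstab : ∀ a, ∀ w ∈ W, (p a).mulVec w ∈ W := by
    intro a w hw
    rw [hmemW] at hw ⊢
    obtain ⟨v, hv, hvw⟩ := hw
    refine ⟨_, hstab a v hv, fun i => ?_⟩
    rw [map_add, map_mul, heuler, mul_zero, zero_add]
    show cc ((A a).mulVec v i) = _
    simp only [Matrix.mulVec, dotProduct, map_sum, map_mul]
    exact Finset.sum_congr rfl fun j _ => by rw [hAcc a i j, hvw j]
  have hWtop := hgen W he₀W hWstab
  -- choose elements of `N` whose constant terms are the standard basis vectors
  have hall : ∀ i : Fin n, ∃ v ∈ N, ∀ j,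
      cc (v j) = Polynomial.C ((Pi.single i (1 : ℂ) : Fin n → ℂ) j) := by
    intro i
    have : Pi.single i (1 : ℂ) ∈ W := by rw [hWtop]; trivial
    rwa [hmemW] at this
  choose v hvN hvc using hall
  set V : Matrix (Fin n) (Fin n) (MvPowerSeries (Fin r ⊕ Fin (s + 1)) (Polynomial ℂ)) :=
    Matrix.of fun j i => v i j with hV
  have hVc : V.map cc = (1 : Matrix (Fin n) (Fin n) (Polynomial ℂ)) := by
    refine Matrix.ext fun j i => ?_
    rw [Matrix.map_apply]
    show cc (v i j) = _
    rw [hvc i j]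
    by_cases h : j = i
    · subst h; simp [Pi.single_apply, Matrix.one_apply]
    · simp [Pi.single_apply, Matrix.one_apply, h, Ne.symm h]
  have hdet : IsUnit V.det := by
    rw [MvPowerSeries.isUnit_iff_constantCoeff]
    have : cc V.det = (V.map cc).det := RingHom.map_det cc V
    rw [show MvPowerSeries.constantCoeff (σ := Fin r ⊕ Fin (s + 1)) (R := Polynomial ℂ) V.det = cc V.det from rfl,
      this, hVc, Matrix.det_one]
    exact isUnit_one
  have hVN : ∀ x : Fin n → MvPowerSeries (Fin r ⊕ Fin (s + 1)) (Polynomial ℂ), V.mulVec x ∈ N := by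
    intro x
    have hx : V.mulVec x = ∑ i, x i • v i := by
      funext j
      simp only [Matrix.mulVec, dotProduct, Finset.sum_apply, Pi.smul_apply,
        smul_eq_mul, hV, Matrix.of_apply]
      exact Finset.sum_congr rfl fun i _ => mul_comm _ _
    rw [hx]
    exact Submodule.sum_mem _ fun i _ => N.smul_mem _ (hvN i)
  rw [Submodule.eq_top_iff']
  intro m
  have hinv : V * V⁻¹ = 1 := Matrix.mul_nonsing_inv V hdet
  have hm : m = V.mulVec (V⁻¹.mulVec m) := by
    rw [Matrix.mulVec_mulVec, hinv, Matrix.one_mulVec]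
  rw [hm]
  exact hVN _
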